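/- Let C ⊆ F^m be a 1-code with 0 ∈ C and let Ċ := C \ {0}. Then the neighborhoods Ω(R_ι + ẑι + e^(ι)), for ι ∈ Ċ, are pairwise disjoint. -/

import Mathlib

/-- `F^m`: binary words of length `m`, i.e. the vector space `(Fin m → ZMod 2)` over GF(2). -/
abbrev Fm (m : ℕ) := Fin m → ZMod 2

/-- Index set for `F^n` with `n = 2^m - 1`: the nonzero vectors of `F^m`. -/
abbrev Idx (m : ℕ) := {v : Fm m // v ≠ 0}

/-- `F^n`: binary words of length `n = 2^m - 1`, with coordinates indexed by
nonzero vectors of `F^m`. -/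
abbrev Fn (m : ℕ) := Idx m → ZMod 2

/-- The coordinate of `c : F^n` at index `α : F^m` (junk value `0` when `α = 0`,
which is never used since coordinates are only ever accessed at nonzero indices). -/
def coord {m : ℕ} (c : Fn m) (α : Fm m) : ZMod 2 :=
  if h : α = 0 then 0 else c ⟨α, h⟩

/-- `e^(ι)`: the word of `F^n` with `1` in coordinate `ι` and `0` elsewhere. -/
def eWord {m : ℕ} (ι : Idx m) : Fn m := fun κ => if κ = ι then 1 else 0

/-- `ẑα = (α, 0^{n-m})`: the word of `F^n` whose coordinate at index `κ` equals `α i`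
if `κ = π^(i)` is the `i`-th standard basis vector `Pi.single i 1`, and `0` otherwise. -/
def zhat {m : ℕ} (α : Fm m) : Fn m :=
  fun κ => ∑ i : Fin m, if (κ : Fm m) = Pi.single i 1 then α i else 0

/-- The Hamming code `H = {c ∈ F^n : ∑_{ι ≠ 0} c_ι • ι = 0}`. -/
def hammingCode (m : ℕ) : Set (Fn m) :=
  {c | ∑ ι : Idx m, c ι • (ι : Fm m) = 0}

/-- The linear `ι`-component `R_ι = {c ∈ H : c_α = c_{α+ι} ∀ α ∉ {0, ι}}`. -/
def Rcomp {m : ℕ} (ι : Idx m) : Set (Fn m) :=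
  {c | c ∈ hammingCode m ∧
    ∀ α : Fm m, α ≠ 0 → α ≠ (ι : Fm m) → coord c α = coord c (α + ι)}

/-- The coset `M + z = {c + z : c ∈ M}`. -/
def coset {m : ℕ} (M : Set (Fn m)) (z : Fn m) : Set (Fn m) := (fun c => c + z) '' M

/-- The neighborhood `Ω(M)` of `M ⊆ F^n`: all words at Hamming distance at most 1 from `M`. -/
def nbhd {m : ℕ} (M : Set (Fn m)) : Set (Fn m) :=
  {x | ∃ c ∈ M, hammingDist x c ≤ 1}

/-- A `1`-code: any two distinct elements are at Hamming distance at least 3. -/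
def IsOneCode {ι : Type*} [Fintype ι] (C : Set (ι → ZMod 2)) : Prop :=
  ∀ x ∈ C, ∀ y ∈ C, x ≠ y → 3 ≤ hammingDist x y

/-- A `1`-perfect code in `F^n`: a `1`-code whose radius-1 balls cover all of `F^n`. -/
def IsOnePerfect {m : ℕ} (P : Set (Fn m)) : Prop :=
  IsOneCode P ∧ ∀ x : Fn m, ∃ c ∈ P, hammingDist x c ≤ 1

/-- In characteristic 2, the sum of two distinct vectors is nonzero. -/
lemma add_ne_zero_of_ne' {m : ℕ} {ι κ : Fm m} (h : ι ≠ κ) : ι + κ ≠ 0 := by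
  intro h0
  apply h
  funext i
  have h1 := congrFun h0 i
  have key : ∀ a b : ZMod 2, a + b = 0 → a = b := by decide
  exact key _ _ h1

namespace S12
variable {m : ℕ}

lemma single_ne_zero' (i : Fin m) : (Pi.single i 1 : Fm m) ≠ 0 := by
  intro h
  have := congrFun h i
  simp at this

lemma norm_le_of_support_subset {x : Fm m} {s : Finset (Fin m)} (h : ∀ j, x j ≠ 0 → j ∈ s) :
    hammingNorm x ≤ s.card := by
  apply Finset.card_le_card
  intro j hj
  exact h j (by simpa using hj)

lemma norm_single_le (i : Fin m) : hammingNorm (Pi.single i 1 : Fm m) ≤ 1 := by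
  have := norm_le_of_support_subset (s := {i}) (x := (Pi.single i 1 : Fm m)) ?_
  · simpa using this
  · intro j hj
    by_contra hji
    simp only [Finset.mem_singleton] at hji
    exact hj (Pi.single_eq_of_ne hji 1)

lemma norm_pair_le (i j : Fin m) :
    hammingNorm (Pi.single i 1 + Pi.single j 1 : Fm m) ≤ 2 := by
  have h := norm_le_of_support_subset (s := {i, j})
    (x := (Pi.single i 1 + Pi.single j 1 : Fm m)) ?_
  · calc hammingNorm _ ≤ ({i, j} : Finset (Fin m)).card := h
      _ ≤ 2 := by
        apply le_trans (Finset.card_insert_le _ _); simp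
  · intro k hk
    by_contra hkij
    simp only [Finset.mem_insert, Finset.mem_singleton, not_or] at hkij
    apply hk
    show (Pi.single i 1 : Fm m) k + (Pi.single j 1 : Fm m) k = 0
    rw [Pi.single_eq_of_ne hkij.1, Pi.single_eq_of_ne hkij.2, add_zero]

lemma not_basis {v : Fm m} (hv : 3 ≤ hammingNorm v) (i : Fin m) : v ≠ Pi.single i 1 := by
  intro h; rw [h] at hv; have := norm_single_le i; omega

lemma not_pair {v : Fm m} (hv : 3 ≤ hammingNorm v) (i j : Fin m) :
    v ≠ Pi.single i 1 + Pi.single j 1 := by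
  intro h; rw [h] at hv; have := norm_pair_le i j; omega

lemma single_eq_single_iff {i j : Fin m} :
    (Pi.single i 1 : Fm m) = Pi.single j 1 ↔ i = j := by
  constructor
  · intro h
    by_contra hij
    have := congrFun h i
    rw [Pi.single_eq_same, Pi.single_eq_of_ne hij] at this
    exact one_ne_zero this
  · rintro rfl; rfl

lemma syn_add (u v : Fn m) :
    ∑ ι : Idx m, (u + v) ι • (ι : Fm m)
      = (∑ ι : Idx m, u ι • (ι : Fm m)) + ∑ ι : Idx m, v ι • (ι : Fm m) := by
  rw [← Finset.sum_add_distrib]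
  exact Finset.sum_congr rfl fun ι _ => by simp [add_smul]

lemma syn_eWord (ι : Idx m) : ∑ κ : Idx m, eWord ι κ • (κ : Fm m) = (ι : Fm m) := by
  simp [eWord, ite_smul]

lemma syn_zhat (α : Fm m) : ∑ κ : Idx m, zhat α κ • (κ : Fm m) = α := by
  unfold zhat
  have step : ∀ κ : Idx m,
      (∑ i : Fin m, if (κ : Fm m) = Pi.single i 1 then α i else 0) • (κ : Fm m)
      = ∑ i : Fin m, if κ = (⟨Pi.single i 1, single_ne_zero' i⟩ : Idx m)
          then α i • (Pi.single i 1 : Fm m) else 0 := by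
    intro κ
    rw [Finset.sum_smul]
    refine Finset.sum_congr rfl fun i _ => ?_
    rw [ite_smul, zero_smul]
    by_cases h : (κ : Fm m) = Pi.single i 1
    · rw [if_pos h, if_pos (Subtype.ext h), h]
    · rw [if_neg h, if_neg (fun hc => h (congrArg Subtype.val hc))]
  rw [Finset.sum_congr rfl fun κ _ => step κ, Finset.sum_comm]
  have inner : ∀ i : Fin m,
      (∑ κ : Idx m, if κ = (⟨Pi.single i 1, single_ne_zero' i⟩ : Idx m)
          then α i • (Pi.single i 1 : Fm m) else 0) = Pi.single i (α i) := by
    intro i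
    rw [Finset.sum_ite_eq' Finset.univ _ (fun _ => α i • (Pi.single i 1 : Fm m))]
    simp only [Finset.mem_univ, if_true]
    funext j
    by_cases h : j = i
    · subst h; simp
    · simp [Pi.single_eq_of_ne h]
  rw [Finset.sum_congr rfl fun i _ => inner i]
  exact Finset.univ_sum_single α

lemma small_syn {w : Fn m} (hs : ∑ ι : Idx m, w ι • (ι : Fm m) = 0)
    (hn : hammingNorm w ≤ 2) : w = 0 := by
  by_contra hw
  have hone : ∀ ι : Idx m, w ι ≠ 0 → w ι = 1 := by
    intro ι hι
    have key : ∀ a : ZMod 2, a ≠ 0 → a = 1 := by decide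
    exact key _ hι
  have hsum : ∑ ι ∈ Finset.filter (fun ι => w ι ≠ 0) Finset.univ, (ι : Fm m) = 0 := by
    calc ∑ ι ∈ Finset.filter (fun ι => w ι ≠ 0) Finset.univ, (ι : Fm m)
        = ∑ ι ∈ Finset.filter (fun ι => w ι ≠ 0) Finset.univ, w ι • (ι : Fm m) :=
          Finset.sum_congr rfl fun ι hι => by
            rw [hone ι (Finset.mem_filter.mp hι).2, one_smul]
      _ = ∑ ι : Idx m, w ι • (ι : Fm m) :=
          Finset.sum_filter_of_ne (fun ι _ h h0 => h (by rw [h0, zero_smul]))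
      _ = 0 := hs
  have hne : (Finset.filter (fun ι => w ι ≠ 0) Finset.univ).Nonempty := by
    rw [Finset.filter_nonempty_iff]
    obtain ⟨ι, hι⟩ := Function.ne_iff.mp hw
    exact ⟨ι, Finset.mem_univ ι, hι⟩
  have hcard : (Finset.filter (fun ι => w ι ≠ 0) Finset.univ).card ≤ 2 := hn
  have h12 : (Finset.filter (fun ι => w ι ≠ 0) Finset.univ).card = 1 ∨
      (Finset.filter (fun ι => w ι ≠ 0) Finset.univ).card = 2 := by
    have := Finset.card_pos.mpr hne; omega
  rcases h12 with h1 | h2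
  · obtain ⟨a, ha⟩ := Finset.card_eq_one.mp h1
    rw [ha, Finset.sum_singleton] at hsum
    exact a.prop hsum
  · obtain ⟨a, b, hab, hs2⟩ := Finset.card_eq_two.mp h2
    rw [hs2, Finset.sum_pair hab] at hsum
    exact add_ne_zero_of_ne' (fun h => hab (Subtype.ext h)) hsum


lemma pi_sub_eq_add {X : Type*} (x y : X → ZMod 2) : x - y = x + y := by
  funext j
  have key : ∀ a b : ZMod 2, a - b = a + b := by decide
  exact key _ _

lemma pi_addadd {X : Type*} (x y : X → ZMod 2) : x + y + y = x := by
  funext j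
  have key : ∀ a b : ZMod 2, a + b + b = a := by decide
  exact key _ _

lemma pi_addself {X : Type*} (x : X → ZMod 2) : x + x = 0 := by
  funext j
  have key : ∀ a : ZMod 2, a + a = 0 := by decide
  exact key _

lemma pi_shift {X : Type*} {x y z : X → ZMod 2} (h : x + y = z) : x = z + y := by
  rw [← h, pi_addadd]

lemma coord_eq {c : Fn m} {γ : Fm m} (h : γ ≠ 0) : coord c γ = c ⟨γ, h⟩ := dif_neg h

lemma eWord_ne {ι γ : Idx m} (h : (γ : Fm m) ≠ (ι : Fm m)) : eWord ι γ = 0 :=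
  if_neg (fun hc => h (congrArg Subtype.val hc))

lemma zhat_eq_zero {v : Fm m} {γ : Idx m} (h : ∀ j, (γ : Fm m) ≠ Pi.single j 1) :
    zhat v γ = 0 :=
  Finset.sum_eq_zero fun j _ => if_neg (h j)

lemma zhat_single (v : Fm m) (i : Fin m) (h : (Pi.single i 1 : Fm m) ≠ 0) :
    zhat v (⟨Pi.single i 1, h⟩ : Idx m) = v i := by
  unfold zhat
  rw [Finset.sum_eq_single_of_mem i (Finset.mem_univ i)]
  · exact if_pos rfl
  · intro j _ hj
    exact if_neg (fun hc => hj (single_eq_single_iff.mp hc).symm)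

lemma zhat_add (u v : Fm m) (γ : Idx m) : zhat (u + v) γ = zhat u γ + zhat v γ := by
  unfold zhat
  rw [← Finset.sum_add_distrib]
  exact Finset.sum_congr rfl fun i _ => by split <;> simp

end S12

/-- If `C ⊆ F^m` is a 1-code with `0 ∈ C`, then the neighborhoods
`Ω(R_ι + ẑι + e^(ι))`, for `ι ∈ Ċ = C \ {0}`, are pairwise disjoint. -/
theorem stmt12 (m : ℕ) (hm : 1 ≤ m) (C : Set (Fm m)) (hC : IsOneCode C)
    (h0 : (0 : Fm m) ∈ C) :
    ∀ ι κ : Idx m, (ι : Fm m) ∈ C → (κ : Fm m) ∈ C → ι ≠ κ →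
      Disjoint (nbhd (coset (Rcomp ι) (zhat (ι : Fm m) + eWord ι)))
        (nbhd (coset (Rcomp κ) (zhat (κ : Fm m) + eWord κ))) := by
  intro ι κ hιC hκC hne
  have hιvκ : (ι : Fm m) ≠ (κ : Fm m) := fun h => hne (Subtype.ext h)
  have hwι : 3 ≤ hammingNorm (ι : Fm m) := by
    have := hC ι hιC 0 h0 ι.prop
    rwa [hammingDist_zero_right] at this
  have hwκ : 3 ≤ hammingNorm (κ : Fm m) := by
    have := hC κ hκC 0 h0 κ.prop
    rwa [hammingDist_zero_right] at this
  have hwδ : 3 ≤ hammingNorm ((ι : Fm m) + (κ : Fm m)) := by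
    have := hC ι hιC κ hκC hιvκ
    rwa [hammingDist_eq_hammingNorm, neg_add_eq_sub, S12.pi_sub_eq_add, add_comm] at this
  rw [Set.disjoint_left]
  rintro x hx1 hx2
  obtain ⟨c1, hc1, hd1⟩ := hx1
  obtain ⟨c2, hc2, hd2⟩ := hx2
  obtain ⟨a, ha, rfl⟩ := hc1
  obtain ⟨b, hb, rfl⟩ := hc2
  have hd1' : hammingDist x (a + (zhat (ι : Fm m) + eWord ι)) ≤ 1 := hd1
  have hd2' : hammingDist x (b + (zhat (κ : Fm m) + eWord κ)) ≤ 1 := hd2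
  -- the difference w has weight ≤ 2 and zero syndrome, so it is zero
  have hdist : hammingDist (a + (zhat (ι : Fm m) + eWord ι))
      (b + (zhat (κ : Fm m) + eWord κ)) ≤ 2 := by
    have := hammingDist_triangle_left (a + (zhat (ι : Fm m) + eWord ι))
      (b + (zhat (κ : Fm m) + eWord κ)) x
    omega
  have hwnorm : hammingNorm ((a + (zhat (ι : Fm m) + eWord ι))
      + (b + (zhat (κ : Fm m) + eWord κ))) ≤ 2 := by
    rw [← S12.pi_sub_eq_add, ← neg_add_eq_sub, ← hammingDist_eq_hammingNorm, hammingDist_comm]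
    exact hdist
  have hsa : ∑ γ : Idx m, a γ • (γ : Fm m) = 0 := ha.1
  have hsb : ∑ γ : Idx m, b γ • (γ : Fm m) = 0 := hb.1
  have hsyn : ∑ γ : Idx m, ((a + (zhat (ι : Fm m) + eWord ι))
      + (b + (zhat (κ : Fm m) + eWord κ))) γ • (γ : Fm m) = 0 := by
    rw [S12.syn_add, S12.syn_add, S12.syn_add, S12.syn_add, S12.syn_add,
      S12.syn_zhat, S12.syn_zhat, S12.syn_eWord, S12.syn_eWord, hsa, hsb,
      zero_add, zero_add, S12.pi_addself, S12.pi_addself, add_zero]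
  have hw0 : (a + (zhat (ι : Fm m) + eWord ι)) + (b + (zhat (κ : Fm m) + eWord κ)) = 0 :=
    S12.small_syn hsyn hwnorm
  have hpt : ∀ γ : Idx m, a γ + b γ
      = zhat ((ι : Fm m) + (κ : Fm m)) γ + (eWord ι γ + eWord κ γ) := by
    intro γ
    have h := congrFun hw0 γ
    rw [S12.zhat_add]
    have key : ∀ x1 x2 x3 x4 x5 x6 : ZMod 2,
        x1 + (x2 + x3) + (x4 + (x5 + x6)) = 0 → x1 + x4 = x2 + x5 + (x3 + x6) := by decide
    exact key _ _ _ _ _ _ h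
  -- pick a coordinate in the support of ι + (κ : Fm m)
  obtain ⟨i, hi⟩ := Function.ne_iff.mp (add_ne_zero_of_ne' hιvκ)
  have hα0 : (Pi.single i 1 : Fm m) ≠ 0 := S12.single_ne_zero' i
  have hαι : (Pi.single i 1 : Fm m) ≠ (ι : Fm m) := fun h => S12.not_basis hwι i h.symm
  have hακ : (Pi.single i 1 : Fm m) ≠ (κ : Fm m) := fun h => S12.not_basis hwκ i h.symm
  have hαδ : (Pi.single i 1 : Fm m) ≠ (ι : Fm m) + (κ : Fm m) := fun h => S12.not_basis hwδ i h.symm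
  have h2 : (Pi.single i 1 : Fm m) + (ι : Fm m) ≠ 0 := add_ne_zero_of_ne' hαι
  have h3 : (Pi.single i 1 : Fm m) + (κ : Fm m) ≠ 0 := add_ne_zero_of_ne' hακ
  have h4 : (Pi.single i 1 : Fm m) + ((ι : Fm m) + (κ : Fm m)) ≠ 0 := add_ne_zero_of_ne' hαδ
  have hne3ι : (Pi.single i 1 : Fm m) + (κ : Fm m) ≠ (ι : Fm m) := by
    intro h
    exact hαδ (S12.pi_shift h)
  have hne2κ : (Pi.single i 1 : Fm m) + (ι : Fm m) ≠ (κ : Fm m) := by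
    intro h
    exact hαδ ((S12.pi_shift h).trans (add_comm _ _))
  -- the four points of the coset
  have Ea1 : a ⟨Pi.single i 1, hα0⟩ = a ⟨Pi.single i 1 + (ι : Fm m), h2⟩ := by
    have := ha.2 (Pi.single i 1) hα0 hαι
    rwa [S12.coord_eq hα0, S12.coord_eq h2] at this
  have Ea2 : a ⟨Pi.single i 1 + (κ : Fm m), h3⟩ = a ⟨Pi.single i 1 + ((ι : Fm m) + (κ : Fm m)), h4⟩ := by
    have heq : (Pi.single i 1 : Fm m) + (κ : Fm m) + (ι : Fm m) = Pi.single i 1 + ((ι : Fm m) + (κ : Fm m)) := by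
      rw [add_assoc, add_comm ((κ : Fm m)) ((ι : Fm m))]
    have := ha.2 ((Pi.single i 1 : Fm m) + (κ : Fm m)) h3 hne3ι
    rw [heq] at this
    rwa [S12.coord_eq h3, S12.coord_eq h4] at this
  have Eb1 : b ⟨Pi.single i 1, hα0⟩ = b ⟨Pi.single i 1 + (κ : Fm m), h3⟩ := by
    have := hb.2 (Pi.single i 1) hα0 hακ
    rwa [S12.coord_eq hα0, S12.coord_eq h3] at this
  have Eb2 : b ⟨Pi.single i 1 + (ι : Fm m), h2⟩ = b ⟨Pi.single i 1 + ((ι : Fm m) + (κ : Fm m)), h4⟩ := by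
    have heq : (Pi.single i 1 : Fm m) + (ι : Fm m) + (κ : Fm m) = Pi.single i 1 + ((ι : Fm m) + (κ : Fm m)) := by
      rw [add_assoc]
    have := hb.2 ((Pi.single i 1 : Fm m) + (ι : Fm m)) h2 hne2κ
    rw [heq] at this
    rwa [S12.coord_eq h2, S12.coord_eq h4] at this
  -- values of the right-hand side at the four points
  have V1 : a ⟨Pi.single i 1, hα0⟩ + b ⟨Pi.single i 1, hα0⟩ = 1 := by
    rw [hpt ⟨Pi.single i 1, hα0⟩, S12.zhat_single _ i hα0,
      S12.eWord_ne (ι := ι) hαι, S12.eWord_ne (ι := κ) hακ]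
    have key : ∀ a : ZMod 2, a ≠ 0 → a + (0 + 0) = 1 := by decide
    exact key _ hi
  have V2 : a ⟨Pi.single i 1 + (ι : Fm m), h2⟩ + b ⟨Pi.single i 1 + (ι : Fm m), h2⟩ = 0 := by
    rw [hpt ⟨Pi.single i 1 + (ι : Fm m), h2⟩]
    rw [S12.zhat_eq_zero (fun j hj => S12.not_pair hwι j i
      (((S12.pi_shift (add_comm (Pi.single i 1 : Fm m) (ι : Fm m) ▸ hj)))))]
    rw [S12.eWord_ne (ι := ι) (fun h => hα0 ((S12.pi_shift h).trans (S12.pi_addself _)))]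
    rw [S12.eWord_ne (ι := κ) hne2κ]
    simp
  have V3 : a ⟨Pi.single i 1 + (κ : Fm m), h3⟩ + b ⟨Pi.single i 1 + (κ : Fm m), h3⟩ = 0 := by
    rw [hpt ⟨Pi.single i 1 + (κ : Fm m), h3⟩]
    rw [S12.zhat_eq_zero (fun j hj => S12.not_pair hwκ j i
      (((S12.pi_shift (add_comm (Pi.single i 1 : Fm m) (κ : Fm m) ▸ hj)))))]
    rw [S12.eWord_ne (ι := ι) hne3ι]
    rw [S12.eWord_ne (ι := κ) (fun h => hα0 ((S12.pi_shift h).trans (S12.pi_addself _)))]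
    simp
  have V4 : a ⟨Pi.single i 1 + ((ι : Fm m) + (κ : Fm m)), h4⟩
      + b ⟨Pi.single i 1 + ((ι : Fm m) + (κ : Fm m)), h4⟩ = 0 := by
    rw [hpt ⟨Pi.single i 1 + ((ι : Fm m) + (κ : Fm m)), h4⟩]
    rw [S12.zhat_eq_zero (fun j hj => S12.not_pair hwδ j i
      (((S12.pi_shift (add_comm (Pi.single i 1 : Fm m) ((ι : Fm m) + (κ : Fm m)) ▸ hj)))))]
    rw [S12.eWord_ne (ι := ι) (fun h => hακ ((S12.pi_shift h).trans
      (by rw [← add_assoc, S12.pi_addself, zero_add])))]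
    rw [S12.eWord_ne (ι := κ) (fun h => hαι ((S12.pi_shift h).trans
      (by rw [add_comm ((ι : Fm m)) ((κ : Fm m)), ← add_assoc, S12.pi_addself, zero_add])))]
    simp
  have key : ∀ x y z w : ZMod 2, (x + z) + (x + w) + (y + z) + (y + w) = 0 := by decide
  have zero : (a ⟨Pi.single i 1, hα0⟩ + b ⟨Pi.single i 1, hα0⟩)
      + (a ⟨Pi.single i 1 + (ι : Fm m), h2⟩ + b ⟨Pi.single i 1 + (ι : Fm m), h2⟩)
      + (a ⟨Pi.single i 1 + (κ : Fm m), h3⟩ + b ⟨Pi.single i 1 + (κ : Fm m), h3⟩)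
      + (a ⟨Pi.single i 1 + ((ι : Fm m) + (κ : Fm m)), h4⟩
          + b ⟨Pi.single i 1 + ((ι : Fm m) + (κ : Fm m)), h4⟩) = 0 := by
    rw [← Ea1, ← Ea2, ← Eb1, ← Eb2]
    exact key _ _ _ _
  rw [V1, V2, V3, V4] at zero
  exact absurd zero (by decide)
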